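/- Quantitative implicit function / continuation statement: Let B₁, B₂ be Banach spaces and Φ : B₁ × [0,1] → B₂ a C¹ map with Φ(0,0) = 0. Suppose there exist constants C, δ, η > 0 with C(δ + 2η) ≤ min(1/(2C), r) for suitable r, such that (i) ‖(∂Φ/∂h)(0,0)^{-1}‖ ≤ C, (ii) ‖(∂Φ/∂h)(h,s) − (∂Φ/∂h)(0,0)‖ ≤ δ + K‖h‖ for all ‖h‖ ≤ r, s ∈ [0,1], with δ + Kr ≤ 1/(2C), and (iii) ‖Φ(0,s)‖ ≤ η for all s. Then there is a unique continuous family {h_s}_{s∈[0,1]} with h_0 = 0, ‖h_s‖ ≤ 2Cη, and Φ(h_s, s) = 0 for all s. -/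

import Mathlib

open scoped NNReal


/-- **Quantitative implicit function theorem (Theorem 3.2 of [sl1]).**
Let `B1`, `B2` be Banach spaces and `Φ : B1 × [0,1] → B2` a `C¹` map with
`Φ(0,0) = 0`.  Suppose there are constants `C, δ, η, K, r > 0` with
`C(δ + 2η) ≤ min(1/(2C), r)` and `δ + K r ≤ 1/(2C)` such that:
(i) the partial derivative `∂Φ/∂h` at `(0,0)` is invertible with inverse of norm
    `≤ C`;
(ii) `‖∂Φ/∂h(h,s) - ∂Φ/∂h(0,0)‖ ≤ δ + K‖h‖` for `‖h‖ ≤ r` and `s ∈ [0,1]`;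
(iii) `‖Φ(0,s)‖ ≤ η` for all `s ∈ [0,1]`.
Then there is a unique continuous family `{h_s}` with `h_0 = 0`, `‖h_s‖ ≤ 2Cη`
and `Φ(h_s, s) = 0` for all `s ∈ [0,1]`. -/
theorem quantitative_implicit_function_theorem
    {B1 B2 : Type*} [NormedAddCommGroup B1] [NormedSpace ℝ B1] [CompleteSpace B1]
    [NormedAddCommGroup B2] [NormedSpace ℝ B2] [CompleteSpace B2]
    (Φ : B1 → ℝ → B2)
    (hC1 : ContDiff ℝ 1 fun p : B1 × ℝ => Φ p.1 p.2)
    (hΦ00 : Φ 0 0 = 0)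
    (C δ η K r : ℝ) (hCpos : 0 < C) (hδ : 0 ≤ δ) (hη : 0 ≤ η) (hK : 0 ≤ K)
    (hr : 0 < r)
    (hconst : C * (δ + 2 * η) ≤ min (1 / (2 * C)) r)
    (hsmall : δ + K * r ≤ 1 / (2 * C))
    (L0 : B1 ≃L[ℝ] B2)
    (hL0 : (L0 : B1 →L[ℝ] B2) = fderiv ℝ (fun h => Φ h 0) 0)
    (hL0inv : ‖(L0.symm : B2 →L[ℝ] B1)‖ ≤ C)
    (hlip : ∀ (h : B1) (s : ℝ), ‖h‖ ≤ r → s ∈ Set.Icc (0 : ℝ) 1 →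
      ‖fderiv ℝ (fun x => Φ x s) h - fderiv ℝ (fun x => Φ x 0) 0‖ ≤ δ + K * ‖h‖)
    (hsmallΦ : ∀ s ∈ Set.Icc (0 : ℝ) 1, ‖Φ 0 s‖ ≤ η) :
    ∃! h : Set.Icc (0 : ℝ) 1 → B1,
      Continuous h ∧ h ⟨0, by norm_num⟩ = 0 ∧
        ∀ s : Set.Icc (0 : ℝ) 1, ‖h s‖ ≤ 2 * C * η ∧ Φ (h s) (s : ℝ) = 0 := by
  classical
  set R : ℝ := 2 * C * η with hRdef
  have hR0 : 0 ≤ R := by positivity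
  have hconst_r : C * (δ + 2 * η) ≤ r := hconst.trans (min_le_right _ _)
  have hRr : R ≤ r := by nlinarith
  have hhalf : ((1/2 : ℝ≥0) : ℝ) = 1/2 := by norm_num
  -- differentiability of Φ in the first variable
  have hdiffp : Differentiable ℝ (fun p : B1 × ℝ => Φ p.1 p.2) :=
    hC1.differentiable one_ne_zero
  have hdiffs : ∀ (s : ℝ), Differentiable ℝ (fun x => Φ x s) := by
    intro s x
    exact (hdiffp (x, s)).comp (f := fun x => (x, s)) x (differentiableAt_id.prodMk (differentiableAt_const s))
  -- Mean value estimate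
  have hb : ∀ s ∈ Set.Icc (0:ℝ) 1, ∀ x ∈ Metric.closedBall (0:B1) r,
      ∀ y ∈ Metric.closedBall (0:B1) r,
      ‖(Φ x s - L0 x) - (Φ y s - L0 y)‖ ≤ (1 / (2 * C)) * ‖x - y‖ := by
    intro s hs x hx y hy
    have := Convex.norm_image_sub_le_of_norm_hasFDerivWithin_le
      (f := fun z => Φ z s - L0 z)
      (f' := fun z => fderiv ℝ (fun x => Φ x s) z - (L0 : B1 →L[ℝ] B2))
      (s := Metric.closedBall (0:B1) r) (C := 1 / (2 * C))
      (fun z _ => (((hdiffs s z).hasFDerivAt).sub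
        ((L0 : B1 →L[ℝ] B2).hasFDerivAt)).hasFDerivWithinAt)
      (fun z hz => by
        rw [hL0]
        have hzr : ‖z‖ ≤ r := by simpa [Metric.mem_closedBall, dist_zero_right] using hz
        calc ‖fderiv ℝ (fun x => Φ x s) z - fderiv ℝ (fun h => Φ h 0) 0‖
            ≤ δ + K * ‖z‖ := hlip z s hzr hs
          _ ≤ δ + K * r := by nlinarith
          _ ≤ 1 / (2 * C) := hsmall)
      (convex_closedBall _ _) hy hx
    simpa using this
  -- contraction estimate for the map x ↦ x - L0⁻¹ (Φ x s)
  have hcontr : ∀ s ∈ Set.Icc (0:ℝ) 1, ∀ x ∈ Metric.closedBall (0:B1) r,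
      ∀ y ∈ Metric.closedBall (0:B1) r,
      ‖(x - L0.symm (Φ x s)) - (y - L0.symm (Φ y s))‖ ≤ (1/2) * ‖x - y‖ := by
    intro s hs x hx y hy
    have key : (x - L0.symm (Φ x s)) - (y - L0.symm (Φ y s))
        = - (L0.symm ((Φ x s - L0 x) - (Φ y s - L0 y))) := by
      simp only [map_sub, ContinuousLinearEquiv.symm_apply_apply]
      abel
    rw [key, norm_neg]
    calc ‖L0.symm ((Φ x s - L0 x) - (Φ y s - L0 y))‖
        ≤ ‖(L0.symm : B2 →L[ℝ] B1)‖ * ‖(Φ x s - L0 x) - (Φ y s - L0 y)‖ :=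
          (L0.symm : B2 →L[ℝ] B1).le_opNorm _
      _ ≤ C * ((1 / (2 * C)) * ‖x - y‖) := by
          apply mul_le_mul hL0inv (hb s hs x hx y hy) (norm_nonneg _) hCpos.le
      _ = (1/2) * ‖x - y‖ := by field_simp
  -- the ball is mapped into itself
  have hmaps : ∀ s ∈ Set.Icc (0:ℝ) 1, ∀ x ∈ Metric.closedBall (0:B1) R,
      (x - L0.symm (Φ x s)) ∈ Metric.closedBall (0:B1) R := by
    intro s hs x hx
    have hxR : ‖x‖ ≤ R := by simpa [Metric.mem_closedBall, dist_zero_right] using hx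
    have hxr : x ∈ Metric.closedBall (0:B1) r := by
      simp only [Metric.mem_closedBall, dist_zero_right]; exact hxR.trans hRr
    have h0r : (0:B1) ∈ Metric.closedBall (0:B1) r := by
      simpa [Metric.mem_closedBall] using hr.le
    have h1 : ‖(x - L0.symm (Φ x s)) - (0 - L0.symm (Φ 0 s))‖ ≤ (1/2) * ‖x - 0‖ :=
      hcontr s hs x hxr 0 h0r
    have h2 : ‖(0:B1) - L0.symm (Φ 0 s)‖ ≤ C * η := by
      rw [zero_sub, norm_neg]
      calc ‖L0.symm (Φ 0 s)‖ ≤ ‖(L0.symm : B2 →L[ℝ] B1)‖ * ‖Φ 0 s‖ :=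
            (L0.symm : B2 →L[ℝ] B1).le_opNorm _
        _ ≤ C * η := mul_le_mul hL0inv (hsmallΦ s hs) (norm_nonneg _) hCpos.le
    rw [Metric.mem_closedBall, dist_zero_right]
    have hxR' : ‖x‖ ≤ 2 * C * η := by rw [← hRdef]; exact hxR
    calc ‖x - L0.symm (Φ x s)‖
        ≤ ‖(x - L0.symm (Φ x s)) - ((0:B1) - L0.symm (Φ 0 s))‖ + ‖(0:B1) - L0.symm (Φ 0 s)‖ := by
          have h3 : x - L0.symm (Φ x s)
              = ((x - L0.symm (Φ x s)) - ((0:B1) - L0.symm (Φ 0 s))) + ((0:B1) - L0.symm (Φ 0 s)) := by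
            abel
          conv_lhs => rw [h3]
          exact norm_add_le _ _
      _ ≤ (1/2) * ‖x - 0‖ + C * η := add_le_add h1 h2
      _ ≤ R := by rw [sub_zero, hRdef]; linarith
  -- the subtype of the closed ball
  haveI : CompleteSpace (Metric.closedBall (0:B1) R) :=
    Metric.isClosed_closedBall.completeSpace_coe
  have h0mem : (0:B1) ∈ Metric.closedBall (0:B1) R := by
    simpa [Metric.mem_closedBall] using hR0
  haveI : Nonempty (Metric.closedBall (0:B1) R) := ⟨⟨0, h0mem⟩⟩
  -- the contraction map
  set F : Set.Icc (0:ℝ) 1 → Metric.closedBall (0:B1) R → Metric.closedBall (0:B1) R :=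
    fun s x => ⟨x.1 - L0.symm (Φ x.1 s.1), hmaps s.1 s.2 x.1 x.2⟩ with hFdef
  have memr : ∀ x : Metric.closedBall (0:B1) R, (x : B1) ∈ Metric.closedBall (0:B1) r := by
    intro x
    have := x.2
    simp only [Metric.mem_closedBall, dist_zero_right] at this ⊢
    exact this.trans hRr
  have hF : ∀ s : Set.Icc (0:ℝ) 1, ContractingWith (1/2 : ℝ≥0) (F s) := by
    intro s
    constructor
    · rw [← NNReal.coe_lt_coe, hhalf]; norm_num
    · apply LipschitzWith.of_dist_le_mul
      intro x y
      rw [Subtype.dist_eq, Subtype.dist_eq, dist_eq_norm, dist_eq_norm, hhalf]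
      exact hcontr s.1 s.2 x.1 (memr x) y.1 (memr y)
  set g : Set.Icc (0:ℝ) 1 → Metric.closedBall (0:B1) R :=
    fun s => ContractingWith.fixedPoint (F s) (hF s) with hgdef
  have hgfix : ∀ s, F s (g s) = g s := fun s => (hF s).fixedPoint_isFixedPt
  -- the solution family
  set h : Set.Icc (0:ℝ) 1 → B1 := fun s => (g s : B1) with hhdef
  have hΦzero : ∀ s, Φ (h s) (s : ℝ) = 0 := by
    intro s
    have h4 : (g s : B1) - L0.symm (Φ (g s : B1) (s:ℝ)) = (g s : B1) :=
      congrArg Subtype.val (hgfix s)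
    have h5 : L0.symm (Φ (h s) (s:ℝ)) = 0 := sub_eq_self.mp h4
    have := congrArg L0 h5
    simpa using this
  have hbound : ∀ s, ‖h s‖ ≤ R := by
    intro s
    have h5 := (g s).2
    rw [Metric.mem_closedBall, dist_zero_right] at h5
    exact h5
  -- uniqueness of fixed points in the ball
  have huniq : ∀ (s : Set.Icc (0:ℝ) 1) (x : B1), ‖x‖ ≤ R → Φ x (s:ℝ) = 0 → x = h s := by
    intro s x hxR hxΦ
    have hxmem : x ∈ Metric.closedBall (0:B1) R := by
      rw [Metric.mem_closedBall, dist_zero_right]; exact hxR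
    have hfp : Function.IsFixedPt (F s) ⟨x, hxmem⟩ := by
      apply Subtype.ext
      show x - L0.symm (Φ x (s:ℝ)) = x
      rw [hxΦ, map_zero, sub_zero]
    have := (hF s).fixedPoint_unique hfp
    exact congrArg Subtype.val this
  -- h 0 = 0
  have h00 : h ⟨0, by norm_num⟩ = 0 := by
    refine (huniq _ 0 (by simpa using hR0) (by simpa using hΦ00)).symm
  -- continuity
  have hcont : Continuous h := by
    rw [continuous_iff_continuousAt]
    intro s₀
    have hkey : ∀ t : Set.Icc (0:ℝ) 1,
        dist (h t) (h s₀) ≤ 2 * (C * ‖Φ (h s₀) (t:ℝ) - Φ (h s₀) (s₀:ℝ)‖) := by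
      intro t
      have hd : dist (g s₀) (g t) ≤ dist (g s₀) (F t (g s₀)) / (1 - ((1/2 : ℝ≥0):ℝ)) :=
        (hF t).dist_le_of_fixedPoint (g s₀) (hF t).fixedPoint_isFixedPt
      rw [hhalf] at hd
      have e1 : dist (g s₀) (F t (g s₀))
          = ‖L0.symm (Φ (h s₀) (t:ℝ)) - L0.symm (Φ (h s₀) ((s₀:ℝ)))‖ := by
        rw [Subtype.dist_eq, dist_eq_norm]
        show ‖(g s₀ : B1) - ((g s₀ : B1) - L0.symm (Φ (g s₀ : B1) (t:ℝ)))‖ = _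
        have hz : L0.symm (Φ (h s₀) ((s₀:ℝ))) = 0 := by
          rw [hΦzero s₀]; simp
        rw [hz, sub_zero]
        congr 1
        abel
      have e2 : ‖L0.symm (Φ (h s₀) (t:ℝ)) - L0.symm (Φ (h s₀) ((s₀:ℝ)))‖
          ≤ C * ‖Φ (h s₀) (t:ℝ) - Φ (h s₀) (s₀:ℝ)‖ := by
        rw [← map_sub]
        calc ‖L0.symm (Φ (h s₀) (t:ℝ) - Φ (h s₀) (s₀:ℝ))‖
            ≤ ‖(L0.symm : B2 →L[ℝ] B1)‖ * ‖Φ (h s₀) (t:ℝ) - Φ (h s₀) (s₀:ℝ)‖ :=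
              (L0.symm : B2 →L[ℝ] B1).le_opNorm _
          _ ≤ C * ‖Φ (h s₀) (t:ℝ) - Φ (h s₀) (s₀:ℝ)‖ :=
              mul_le_mul_of_nonneg_right hL0inv (norm_nonneg _)
      have e0 : dist (h t) (h s₀) = dist (g s₀) (g t) := by
        rw [Subtype.dist_eq, dist_comm]
      rw [e0]
      calc dist (g s₀) (g t) ≤ dist (g s₀) (F t (g s₀)) / (1 - 1/2) := hd
        _ = 2 * dist (g s₀) (F t (g s₀)) := by norm_num; ring
        _ ≤ 2 * (C * ‖Φ (h s₀) (t:ℝ) - Φ (h s₀) (s₀:ℝ)‖) := by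
            rw [e1]; linarith [e2]
    have hΦcont : Continuous fun t : Set.Icc (0:ℝ) 1 => Φ (h s₀) (t:ℝ) :=
      hC1.continuous.comp (continuous_const.prodMk continuous_subtype_val)
    have htend : Filter.Tendsto (fun t => dist (h t) (h s₀)) (nhds s₀) (nhds 0) := by
      apply squeeze_zero (fun t => dist_nonneg) hkey
      have : Filter.Tendsto (fun t : Set.Icc (0:ℝ) 1 =>
          2 * (C * ‖Φ (h s₀) (t:ℝ) - Φ (h s₀) (s₀:ℝ)‖)) (nhds s₀)
          (nhds (2 * (C * ‖Φ (h s₀) (s₀:ℝ) - Φ (h s₀) (s₀:ℝ)‖))) :=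
        (continuous_const.mul (continuous_const.mul
          ((hΦcont.sub continuous_const).norm))).tendsto s₀
      simpa using this
    exact tendsto_iff_dist_tendsto_zero.mpr htend
  -- conclusion
  refine ⟨h, ⟨hcont, h00, fun s => ⟨hbound s, hΦzero s⟩⟩, ?_⟩
  rintro h' ⟨hc', h0', hp'⟩
  funext s
  exact huniq s (h' s) (hp' s).1 (hp' s).2
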